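/- Lemma 5.1 (uniform stability of projected noisy gradient descent with shared noise). Let C ⊆ ℝ^p be a nonempty closed convex set and let f, f′ : ℝ^p → ℝ be differentiable, m-strongly convex, and M-smooth functions such that ‖∇f(θ) − ∇f′(θ)‖ ≤ Δ for all θ ∈ C. Fix a step size η with 0 < η ≤ 1/M, an initial point θ₀ = θ₀′ ∈ C, and an arbitrary sequence of vectors (ξ_t)_{t≥0} in ℝ^p (a shared realization of the noise). Define θ_{t+1} = Π_C(θ_t − η ∇f(θ_t) + ξ_t) and θ′_{t+1} = Π_C(θ′_t − η ∇f′(θ′_t) + ξ_t), where Π_C denotes Euclidean projection onto C. Then for every t ≥ 0, ‖θ_t − θ′_t‖ ≤ Δ/m. -/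

import Mathlib

open MeasureTheory Real

noncomputable section

open Set
open scoped RealInnerProductSpace

set_option maxHeartbeats 1000000

section Helpers

variable {E : Type*} [NormedAddCommGroup E] [InnerProductSpace ℝ E] [CompleteSpace E]

lemma hasDerivAt_line' {φ : E → ℝ} {G : E → E} (hG : ∀ x, HasGradientAt φ (G x) x)
    (x d : E) (t : ℝ) :
    HasDerivAt (fun s : ℝ => φ (x + s • d)) ⟪G (x + t • d), d⟫ t := by
  have hline : HasDerivAt (fun s : ℝ => x + s • d) d t := by
    simpa using ((hasDerivAt_id t).smul_const d).const_add x
  have hφ := (hasGradientAt_iff_hasFDerivAt.mp (hG (x + t • d)))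
  have := hφ.comp_hasDerivAt t hline
  simpa [InnerProductSpace.toDual_apply_apply, Function.comp_def] using this

lemma mono_of_convexOn' {φ : E → ℝ} {G : E → E} (hG : ∀ x, HasGradientAt φ (G x) x)
    (hconv : ConvexOn ℝ Set.univ φ) (a b : E) : 0 ≤ ⟪G a - G b, a - b⟫ := by
  have hρ : ∀ t : ℝ, HasDerivAt (fun s : ℝ => φ (b + s • (a - b)))
      ⟪G (b + t • (a - b)), a - b⟫ t := hasDerivAt_line' hG b (a - b)
  have hc : ConvexOn ℝ Set.univ (fun s : ℝ => φ (b + s • (a - b))) := by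
    have := hconv.comp_affineMap (AffineMap.lineMap b a)
    have heq : (φ ∘ (AffineMap.lineMap b a : ℝ →ᵃ[ℝ] E)) =
        fun s : ℝ => φ (b + s • (a - b)) := by
      funext s
      simp [Function.comp, AffineMap.lineMap_apply_module', add_comm]
    rw [heq] at this
    simpa using this
  have h1 := hc.le_slope_of_hasDerivAt (mem_univ (0 : ℝ)) (mem_univ 1) zero_lt_one
    (by simpa using hρ 0)
  have h2 := hc.slope_le_of_hasDerivAt (mem_univ (0 : ℝ)) (mem_univ 1) zero_lt_one
    (by simpa using hρ 1)
  have := h1.trans h2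
  rw [inner_sub_left]
  linarith

lemma grad_lower' {φ : E → ℝ} {G : E → E} (hG : ∀ x, HasGradientAt φ (G x) x)
    (hmono : ∀ a b : E, 0 ≤ ⟪G a - G b, a - b⟫) (x y : E) :
    φ x + ⟪G x, y - x⟫ ≤ φ y := by
  obtain ⟨c, hc, hceq⟩ := exists_hasDerivAt_eq_slope (fun t : ℝ => φ (x + t • (y - x)))
    (fun t => ⟪G (x + t • (y - x)), y - x⟫) zero_lt_one
    (fun t _ => (hasDerivAt_line' hG x (y - x) t).continuousAt.continuousWithinAt)
    (fun t _ => hasDerivAt_line' hG x (y - x) t)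
  have e1 : x + (1 : ℝ) • (y - x) = y := by simp
  have e0 : x + (0 : ℝ) • (y - x) = x := by simp
  rw [e1, e0] at hceq
  have hm := hmono (x + c • (y - x)) x
  have e2 : x + c • (y - x) - x = c • (y - x) := by abel
  rw [e2, real_inner_smul_right] at hm
  have hcpos : 0 < c := hc.1
  have h3 : 0 ≤ ⟪G (x + c • (y - x)) - G x, y - x⟫ := nonneg_of_mul_nonneg_right hm hcpos
  rw [inner_sub_left] at h3
  have h4 : ⟪G (x + c • (y - x)), y - x⟫ = φ y - φ x := by
    rw [hceq]; ring
  linarith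

lemma hasGradientAt_quad' (c : ℝ) (x : E) :
    HasGradientAt (fun y : E => c * ‖y‖ ^ 2) ((2 * c) • x) x := by
  rw [hasGradientAt_iff_hasFDerivAt]
  have h1 := ((hasFDerivAt_id x).inner ℝ (hasFDerivAt_id x)).const_mul c
  simp only [id] at h1
  have hfun : (fun y : E => c * ⟪y, y⟫) = fun y : E => c * ‖y‖ ^ 2 := by
    funext y; rw [real_inner_self_eq_norm_sq]
  rw [hfun] at h1
  convert h1 using 1
  · rfl
  ext v
  simp [fderivInnerCLM_apply, InnerProductSpace.toDual_apply_apply, real_inner_smul_left,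
    real_inner_comm]
  ring

lemma gd_contraction' {f : E → ℝ} {g : E → E} {m M η : ℝ}
    (hm : 0 < m) (hM : 0 < M)
    (hQ1 : ∀ x z : E, f x + ⟪g x, z - x⟫ + m / 2 * ‖z - x‖ ^ 2 ≤ f z)
    (hQ2 : ∀ y z : E, f z ≤ f y + ⟪g y, z - y⟫ + M / 2 * ‖z - y‖ ^ 2)
    (hη0 : 0 < η) (hηM : η * M ≤ 1) (hmM : m ≤ M) (x y : E) :
    ‖(x - η • g x) - (y - η • g y)‖ ≤ (1 - η * m) * ‖x - y‖ := by
  set d : E := x - y with hd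
  set w : E := g x - g y with hw
  set u : E := w - m • d with hu
  have hwu : w = u + m • d := by rw [hu]; abel
  have hU0 : (0:ℝ) ≤ ‖u‖ ^ 2 := sq_nonneg _
  have hD0 : (0:ℝ) ≤ ‖d‖ ^ 2 := sq_nonneg _
  have h1mm : 0 ≤ 1 - η * m := by nlinarith
  have hwu' : ⟪g x, u⟫ - ⟪g y, u⟫ = ‖u‖ ^ 2 + m * ⟪u, d⟫ := by
    rw [← inner_sub_left, ← hw, hwu, inner_add_left, real_inner_smul_left,
      real_inner_self_eq_norm_sq, real_inner_comm d u]
  have hwd' : ⟪g x, d⟫ - ⟪g y, d⟫ = ⟪u, d⟫ + m * ‖d‖ ^ 2 := by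
    rw [← inner_sub_left, ← hw, hwu, inner_add_left, real_inner_smul_left,
      real_inner_self_eq_norm_sq]
  have hc0 : 0 ≤ ⟪u, d⟫ := by
    have e1 := hQ1 x y
    have e2 := hQ1 y x
    have k1 : y - x = -d := by rw [hd]; abel
    have k2 : x - y = d := hd.symm
    rw [k1, inner_neg_right] at e1
    rw [k2] at e2
    have n1 : ‖(-d : E)‖ ^ 2 = ‖d‖ ^ 2 := by rw [norm_neg]
    rw [n1] at e1
    linarith [hwd', e1, e2]
  have hdagger : ∀ s : ℝ, 2 * s * ‖u‖ ^ 2 - (M - m) * s ^ 2 * ‖u‖ ^ 2 ≤ ⟪u, d⟫ := by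
    intro s
    have e1 := hQ1 x (y + s • u)
    have e2 := hQ2 y (y + s • u)
    have e3 := hQ1 y (x - s • u)
    have e4 := hQ2 x (x - s • u)
    have k1 : y + s • u - x = s • u - d := by rw [hd]; abel
    have k2 : y + s • u - y = s • u := by abel
    have k3 : x - s • u - y = d - s • u := by rw [hd]; abel
    have k4 : x - s • u - x = -(s • u) := by abel
    rw [k1] at e1; rw [k2] at e2; rw [k3] at e3; rw [k4] at e4
    have nsu : ‖s • u‖ ^ 2 = s ^ 2 * ‖u‖ ^ 2 := by
      rw [norm_smul, mul_pow, Real.norm_eq_abs, sq_abs]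
    have n1 : ‖s • u - d‖ ^ 2 = s ^ 2 * ‖u‖ ^ 2 - 2 * (s * ⟪u, d⟫) + ‖d‖ ^ 2 := by
      rw [norm_sub_sq_real, nsu, real_inner_smul_left]
    have n3 : ‖d - s • u‖ ^ 2 = ‖d‖ ^ 2 - 2 * (s * ⟪u, d⟫) + s ^ 2 * ‖u‖ ^ 2 := by
      rw [norm_sub_sq_real, nsu, real_inner_smul_right, real_inner_comm d u]
    have n4 : ‖(-(s • u) : E)‖ ^ 2 = s ^ 2 * ‖u‖ ^ 2 := by rw [norm_neg, nsu]
    rw [n1, inner_sub_right, real_inner_smul_right] at e1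
    rw [nsu, real_inner_smul_right] at e2
    rw [n3, inner_sub_right, real_inner_smul_right] at e3
    rw [n4, inner_neg_right, real_inner_smul_right] at e4
    have hwu2 : 2 * s * (⟪g x, u⟫ - ⟪g y, u⟫) = 2 * s * (‖u‖ ^ 2 + m * ⟪u, d⟫) := by
      rw [hwu']
    linarith [e1, e2, e3, e4, hwu2, hwd']
  have hkey : η * ‖u‖ ^ 2 ≤ 2 * (1 - η * m) * ⟪u, d⟫ := by
    rcases eq_or_lt_of_le h1mm with h0 | hpos
    · have hmeqM : m = M := by nlinarith
      rcases eq_or_lt_of_le hU0 with hU0' | hUpos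
      · nlinarith
      · exfalso
        have hdag := hdagger ((⟪u, d⟫ + 1) / (2 * ‖u‖ ^ 2))
        rw [← hmeqM, sub_self] at hdag
        have h2U : (0:ℝ) < 2 * ‖u‖ ^ 2 := by linarith
        have heq : 2 * ((⟪u, d⟫ + 1) / (2 * ‖u‖ ^ 2)) * ‖u‖ ^ 2 = ⟪u, d⟫ + 1 := by
          calc _ = (⟪u, d⟫ + 1) * ((2 * ‖u‖ ^ 2) / (2 * ‖u‖ ^ 2)) := by ring
            _ = _ := by rw [div_self h2U.ne', mul_one]
        rw [zero_mul, zero_mul, sub_zero, heq] at hdag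
        linarith
    · have hs0 : 0 < 2 * (1 - η * m) := by linarith
      have hdag := hdagger (η / (2 * (1 - η * m)))
      have hspos : 0 < η / (2 * (1 - η * m)) := div_pos hη0 hs0
      have hMs : (M - m) * (η / (2 * (1 - η * m))) ≤ 1 := by
        rw [← mul_div_assoc, div_le_one hs0]
        nlinarith
      have h3 : (η / (2 * (1 - η * m))) * (2 * (1 - η * m)) = η := by
        field_simp
      nlinarith [hdag, mul_le_mul_of_nonneg_right hMs (mul_nonneg hspos.le hU0),
        mul_pos hspos hspos]
  have hv : (x - η • g x) - (y - η • g y) = d - η • w := by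
    rw [hd, hw, smul_sub]; abel
  rw [hv]
  have hB : ‖w‖ ^ 2 = ‖u‖ ^ 2 + 2 * m * ⟪u, d⟫ + m ^ 2 * ‖d‖ ^ 2 := by
    rw [hwu, norm_add_sq_real, real_inner_smul_right, norm_smul, mul_pow,
      Real.norm_eq_abs, sq_abs, real_inner_comm d u]; ring
  have hA : ⟪w, d⟫ = ⟪u, d⟫ + m * ‖d‖ ^ 2 := by
    rw [hwu, inner_add_left, real_inner_smul_left, real_inner_self_eq_norm_sq]
  have hn : ‖d - η • w‖ ^ 2
      = ‖d‖ ^ 2 - 2 * (η * (⟪u, d⟫ + m * ‖d‖ ^ 2))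
        + η ^ 2 * (‖u‖ ^ 2 + 2 * m * ⟪u, d⟫ + m ^ 2 * ‖d‖ ^ 2) := by
    rw [norm_sub_sq_real, real_inner_smul_right, real_inner_comm w d, hA, norm_smul, mul_pow,
      Real.norm_eq_abs, sq_abs, hB]
  have hsq : ‖d - η • w‖ ^ 2 ≤ ((1 - η * m) * ‖d‖) ^ 2 := by
    rw [hn]
    have hmul : η * (η * ‖u‖ ^ 2) ≤ η * (2 * (1 - η * m) * ⟪u, d⟫) :=
      mul_le_mul_of_nonneg_left hkey hη0.le
    nlinarith [hmul]
  have hRnn : 0 ≤ (1 - η * m) * ‖d‖ := mul_nonneg h1mm (norm_nonneg d)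
  nlinarith [hsq, norm_nonneg (d - η • w), hRnn]

end Helpers

/-- ℝ^p as a Euclidean space. -/
abbrev Eu (p : ℕ) := EuclideanSpace ℝ (Fin p)

/-- Lemma 5.1: uniform stability of projected noisy gradient descent
with a shared realization of the noise. -/
theorem projected_noisy_gd_uniform_stability
    {p : ℕ}
    (C : Set (Eu p)) (hCne : C.Nonempty) (hCcl : IsClosed C) (hCconv : Convex ℝ C)
    (f f' : Eu p → ℝ) (g g' : Eu p → Eu p)
    (hf : ∀ x, HasGradientAt f (g x) x) (hf' : ∀ x, HasGradientAt f' (g' x) x)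
    (m M : ℝ) (hm : 0 < m)
    -- `m`-strong convexity: `f - (m/2)‖·‖²` is convex
    (hsc : ConvexOn ℝ Set.univ (fun x => f x - m / 2 * ‖x‖ ^ 2))
    (hsc' : ConvexOn ℝ Set.univ (fun x => f' x - m / 2 * ‖x‖ ^ 2))
    -- `M`-smoothness: the gradients are `M`-Lipschitz
    (hsm : LipschitzWith M.toNNReal g) (hsm' : LipschitzWith M.toNNReal g')
    (Δ : ℝ) (hΔ : ∀ x ∈ C, ‖g x - g' x‖ ≤ Δ)
    (η : ℝ) (hη0 : 0 < η) (hηM : η ≤ 1 / M)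
    -- `proj` is the Euclidean projection onto `C`
    (proj : Eu p → Eu p)
    (hproj : ∀ v, proj v ∈ C ∧ ∀ x ∈ C, dist v (proj v) ≤ dist v x)
    (ξ : ℕ → Eu p)
    (θ θ' : ℕ → Eu p) (hθ0 : θ 0 = θ' 0) (hθ0C : θ 0 ∈ C)
    (hstep : ∀ t, θ (t + 1) = proj (θ t - η • g (θ t) + ξ t))
    (hstep' : ∀ t, θ' (t + 1) = proj (θ' t - η • g' (θ' t) + ξ t)) :
    ∀ t, ‖θ t - θ' t‖ ≤ Δ / m := by
  obtain ⟨x₀, hx₀⟩ := hCne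
  have hΔ0 : 0 ≤ Δ := le_trans (norm_nonneg _) (hΔ x₀ hx₀)
  rcases subsingleton_or_nontrivial (Eu p) with hsub | hnt
  · intro t
    have hz : θ t - θ' t = 0 := Subsingleton.elim _ _
    rw [hz, norm_zero]
    exact div_nonneg hΔ0 hm.le
  -- now the nontrivial case
  have hM : 0 < M := by
    by_contra h
    push_neg at h
    have : 1 / M ≤ 0 := one_div_nonpos.mpr h
    linarith
  have hηM1 : η * M ≤ 1 := by rwa [le_div_iff₀ hM] at hηM
  have hMc : (M.toNNReal : ℝ) = M := Real.coe_toNNReal M hM.le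
  -- gradient of the strongly convex shift
  have hGh : ∀ z : Eu p, HasGradientAt (fun y => f y - m / 2 * ‖y‖ ^ 2) (g z - m • z) z := by
    intro z
    have h1 := hasGradientAt_iff_hasFDerivAt.mp (hf z)
    have h2 := hasGradientAt_iff_hasFDerivAt.mp (hasGradientAt_quad' (m / 2) z)
    rw [hasGradientAt_iff_hasFDerivAt, map_sub]
    have e : (2 * (m / 2)) • z = m • z := by rw [show 2 * (m / 2) = m by ring]
    rw [← e]
    exact h1.sub h2
  have hGψ : ∀ z : Eu p, HasGradientAt (fun y => M / 2 * ‖y‖ ^ 2 - f y) (M • z - g z) z := by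
    intro z
    have h1 := hasGradientAt_iff_hasFDerivAt.mp (hf z)
    have h2 := hasGradientAt_iff_hasFDerivAt.mp (hasGradientAt_quad' (M / 2) z)
    rw [hasGradientAt_iff_hasFDerivAt, map_sub]
    have e : (2 * (M / 2)) • z = M • z := by rw [show 2 * (M / 2) = M by ring]
    rw [← e]
    exact h2.sub h1
  have hmono := mono_of_convexOn' hGh hsc
  have hP1 := grad_lower' hGh hmono
  have hQ1 : ∀ x z : Eu p, f x + ⟪g x, z - x⟫ + m / 2 * ‖z - x‖ ^ 2 ≤ f z := by
    intro a z
    have h := hP1 a z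
    have hxp : ⟪g a - m • a, z - a⟫ = ⟪g a, z - a⟫ - m * ⟪a, z - a⟫ := by
      rw [inner_sub_left, real_inner_smul_left]
    rw [hxp] at h
    have h2' : m * ⟪a, z - a⟫ = m * (⟪a, z⟫ - ‖a‖ ^ 2) := by
      rw [inner_sub_right, real_inner_self_eq_norm_sq]
    have h3' : m / 2 * ‖z - a‖ ^ 2 = m / 2 * (‖z‖ ^ 2 - 2 * ⟪z, a⟫ + ‖a‖ ^ 2) := by
      rw [norm_sub_sq_real]
    have h4' : m * ⟪a, z⟫ = m * ⟪z, a⟫ := by rw [real_inner_comm z a]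
    linarith
  have hmonoψ : ∀ a b : Eu p, 0 ≤ ⟪(M • a - g a) - (M • b - g b), a - b⟫ := by
    intro a b
    have hL : ‖g a - g b‖ ≤ M * ‖a - b‖ := by
      have h := hsm.dist_le_mul a b
      rwa [dist_eq_norm, dist_eq_norm, hMc] at h
    have hCS := real_inner_le_norm (g a - g b) (a - b)
    have hexp : (M • a - g a) - (M • b - g b) = M • (a - b) - (g a - g b) := by
      rw [smul_sub]; abel
    rw [hexp, inner_sub_left, real_inner_smul_left, real_inner_self_eq_norm_sq]
    nlinarith [norm_nonneg (a - b), norm_nonneg (g a - g b),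
      mul_le_mul_of_nonneg_right hL (norm_nonneg (a - b))]
  have hP2 := grad_lower' hGψ hmonoψ
  have hQ2 : ∀ y z : Eu p, f z ≤ f y + ⟪g y, z - y⟫ + M / 2 * ‖z - y‖ ^ 2 := by
    intro a z
    have h := hP2 a z
    have hxp : ⟪M • a - g a, z - a⟫ = M * ⟪a, z - a⟫ - ⟪g a, z - a⟫ := by
      rw [inner_sub_left, real_inner_smul_left]
    rw [hxp] at h
    have h2' : M * ⟪a, z - a⟫ = M * (⟪a, z⟫ - ‖a‖ ^ 2) := by
      rw [inner_sub_right, real_inner_self_eq_norm_sq]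
    have h3' : M / 2 * ‖z - a‖ ^ 2 = M / 2 * (‖z‖ ^ 2 - 2 * ⟪z, a⟫ + ‖a‖ ^ 2) := by
      rw [norm_sub_sq_real]
    have h4' : M * ⟪a, z⟫ = M * ⟪z, a⟫ := by rw [real_inner_comm z a]
    linarith
  -- m ≤ M
  obtain ⟨v, hv⟩ := exists_ne (0 : Eu p)
  have hmM : m ≤ M := by
    have e1 := hQ1 v 0
    have e2 := hQ1 0 v
    rw [zero_sub, inner_neg_right, norm_neg] at e1
    rw [sub_zero] at e2
    have hs : m * ‖v‖ ^ 2 ≤ ⟪g v, v⟫ - ⟪g 0, v⟫ := by linarith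
    have hs2 : ⟪g v - g 0, v⟫ = ⟪g v, v⟫ - ⟪g 0, v⟫ := inner_sub_left _ _ _
    have hCS := real_inner_le_norm (g v - g 0) v
    have hL : ‖g v - g 0‖ ≤ M * ‖v - 0‖ := by
      have h := hsm.dist_le_mul v 0
      rwa [dist_eq_norm, dist_eq_norm, hMc] at h
    rw [sub_zero] at hL
    have hv2 : 0 < ‖v‖ := norm_pos_iff.mpr hv
    have hv2' : 0 < ‖v‖ ^ 2 := by positivity
    have hvv : ‖v‖ * ‖v‖ = ‖v‖ ^ 2 := by ring
    nlinarith [mul_le_mul_of_nonneg_right hL (norm_nonneg v), hv2', hvv, hs, hs2, hCS]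
  -- projection facts
  have hvar : ∀ v, ∀ z ∈ C, ⟪v - proj v, z - proj v⟫ ≤ 0 := by
    intro v z hz
    haveI : Nonempty C := ⟨⟨x₀, hx₀⟩⟩
    have h1 : ‖v - proj v‖ = ⨅ w : C, ‖v - w‖ := by
      apply le_antisymm
      · exact le_ciInf fun w => by
          simpa [dist_eq_norm] using (hproj v).2 w w.2
      · have hbdd : BddBelow (Set.range fun w : C => ‖v - (w : Eu p)‖) := by
          refine ⟨0, ?_⟩
          rintro r ⟨w, rfl⟩
          exact norm_nonneg _
        exact ciInf_le hbdd ⟨proj v, (hproj v).1⟩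
    exact (norm_eq_iInf_iff_real_inner_le_zero hCconv (hproj v).1).mp h1 z hz
  have hne : ∀ a b, ‖proj a - proj b‖ ≤ ‖a - b‖ := by
    intro a b
    have h1 := hvar a (proj b) (hproj b).1
    have h2 := hvar b (proj a) (hproj a).1
    have h1' : 0 ≤ ⟪a - proj a, proj a - proj b⟫ := by
      have e : proj b - proj a = -(proj a - proj b) := by abel
      rw [e, inner_neg_right] at h1; linarith
    have key : ‖proj a - proj b‖ ^ 2 ≤ ⟪a - b, proj a - proj b⟫ := by
      have e : (a - proj a) - (b - proj b) = (a - b) - (proj a - proj b) := by abel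
      have h3 : 0 ≤ ⟪(a - b) - (proj a - proj b), proj a - proj b⟫ := by
        rw [← e, inner_sub_left]; linarith
      rw [inner_sub_left, real_inner_self_eq_norm_sq] at h3; linarith
    have hCS := real_inner_le_norm (a - b) (proj a - proj b)
    nlinarith [norm_nonneg (proj a - proj b), norm_nonneg (a - b)]
  have hθ'C : ∀ t, θ' t ∈ C := by
    intro t
    cases t with
    | zero => rw [← hθ0]; exact hθ0C
    | succ n => rw [hstep']; exact (hproj _).1
  -- main induction
  intro t
  induction t with
  | zero => rw [hθ0, sub_self, norm_zero]; exact div_nonneg hΔ0 hm.le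
  | succ n ih =>
    have hcontr := gd_contraction' hm hM hQ1 hQ2 hη0 hηM1 hmM (θ n) (θ' n)
    have hb : ‖g (θ' n) - g' (θ' n)‖ ≤ Δ := hΔ _ (hθ'C n)
    have hstepeq : θ (n + 1) - θ' (n + 1)
        = proj (θ n - η • g (θ n) + ξ n) - proj (θ' n - η • g' (θ' n) + ξ n) := by
      rw [hstep, hstep']
    rw [hstepeq]
    have h1 := hne (θ n - η • g (θ n) + ξ n) (θ' n - η • g' (θ' n) + ξ n)
    have h2 : (θ n - η • g (θ n) + ξ n) - (θ' n - η • g' (θ' n) + ξ n)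
        = ((θ n - η • g (θ n)) - (θ' n - η • g (θ' n))) - η • (g (θ' n) - g' (θ' n)) := by
      rw [smul_sub]; abel
    rw [h2] at h1
    have h3 := norm_sub_le ((θ n - η • g (θ n)) - (θ' n - η • g (θ' n)))
      (η • (g (θ' n) - g' (θ' n)))
    have h4 : ‖η • (g (θ' n) - g' (θ' n))‖ ≤ η * Δ := by
      rw [norm_smul, Real.norm_eq_abs, abs_of_pos hη0]
      exact mul_le_mul_of_nonneg_left hb hη0.le
    have h1mm : 0 ≤ 1 - η * m := by nlinarith
    have h5 : (1 - η * m) * ‖θ n - θ' n‖ ≤ (1 - η * m) * (Δ / m) :=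
      mul_le_mul_of_nonneg_left ih h1mm
    have h6 : (1 - η * m) * (Δ / m) + η * Δ = Δ / m := by
      field_simp; ring
    linarith [h1, h3, hcontr, h4, h5, h6]

end
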